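/- The total area (sum of all ordinates c_1 + ... + c_{2n}) summed over all Deutsch paths of length 2n returning to the x-axis equals Σ_{k≥0} 3^k · [ C(3n-k, n-1-k) + 3·C(3n-1-k, n-2-k) ]. -/

import Mathlib

/-- A Deutsch step: up-step 1 or a down-step -1, -3, -5, .... -/
def DeutschStep (s : ℤ) : Prop := s = 1 ∨ ∃ j : ℕ, s = -(2 * j + 1)

/-- A Deutsch path: all steps are Deutsch steps and all partial sums (heights)
are nonnegative. -/
def IsDeutschPath (p : List ℤ) : Prop :=
  (∀ s ∈ p, DeutschStep s) ∧ ∀ m : ℕ, 0 ≤ (p.take m).sum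

/-- Number of Deutsch paths from (0,0) to (n,k). -/
noncomputable def deutschCount (n k : ℕ) : ℕ :=
  Nat.card {p : List ℤ // p.length = n ∧ IsDeutschPath p ∧ p.sum = (k : ℤ)}

/-- The area of a path given by its step list: the sum of the ordinates
c₁ + c₂ + ⋯ + c_{length}, where c_m is the m-th partial sum of the steps. -/
def pathArea (p : List ℤ) : ℤ :=
  ∑ m ∈ Finset.range p.length, (p.take (m + 1)).sum

/-- Binomial coefficient with integer lower index. -/
def chZ (a : ℕ) (b : ℤ) : ℤ := if 0 ≤ b then (a.choose b.toNat : ℤ) else 0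

lemma chZ_neg {a : ℕ} {b : ℤ} (h : b < 0) : chZ a b = 0 := by
  simp [chZ, not_le.mpr h]

lemma chZ_zero (a : ℕ) : chZ a 0 = 1 := by simp [chZ]

lemma chZ_of_nonneg {a : ℕ} {b : ℤ} (h : 0 ≤ b) : chZ a b = (a.choose b.toNat : ℤ) := by
  simp [chZ, h]

lemma chZ_big {a : ℕ} {b : ℤ} (h : (a : ℤ) < b) : chZ a b = 0 := by
  rw [chZ, if_pos (by omega)]
  rw [Nat.choose_eq_zero_of_lt (by omega)]
  simp

lemma chZ_pascal (a : ℕ) (b : ℤ) : chZ (a+1) b = chZ a b + chZ a (b-1) := by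
  rcases lt_trichotomy b 0 with h | h | h
  · rw [chZ_neg h, chZ_neg h, chZ_neg (by omega)]; ring
  · subst h; rw [chZ_zero, chZ_zero, chZ_neg (by omega)]; ring
  · have hb : 0 ≤ b := le_of_lt h
    have hb1 : 0 ≤ b - 1 := by omega
    rw [chZ_of_nonneg hb, chZ_of_nonneg hb, chZ_of_nonneg hb1]
    have h1 : b.toNat = (b-1).toNat + 1 := by omega
    rw [h1, Nat.choose_succ_succ']
    push_cast; ring

/-- Weighted sum of binomials G(h,q) = Σ_j 3^j C(h-j, q-j). -/
def G (h : ℕ) (q : ℤ) : ℤ := ∑ j ∈ Finset.range (h+1), 3^j * chZ (h - j) (q - j)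

lemma G_neg {h : ℕ} {q : ℤ} (hq : q < 0) : G h q = 0 := by
  apply Finset.sum_eq_zero
  intro j hj
  rw [chZ_neg (by omega)]; ring

lemma G_zero (h : ℕ) : G h 0 = 1 := by
  rw [G, Finset.sum_eq_single 0]
  · simp [chZ_zero]
  · intro j hj hj0
    rw [chZ_neg (by omega)]; ring
  · intro h0; simp at h0

lemma G_pascal (h : ℕ) (q : ℤ) (hq : q ≤ h) : G (h+1) q = G h q + G h (q-1) := by
  rw [G, Finset.sum_range_succ]
  rw [show ((h+1) - (h+1) : ℕ) = 0 from by omega]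
  rw [chZ_neg (by omega)]
  rw [show (∑ j ∈ Finset.range (h+1), 3^j * chZ (h + 1 - j) (q - j))
      = ∑ j ∈ Finset.range (h+1), (3^j * chZ (h - j) (q - j) + 3^j * chZ (h - j) (q - 1 - j)) from ?_]
  · rw [Finset.sum_add_distrib]; rw [G, G]; ring
  · apply Finset.sum_congr rfl
    intro j hj
    have hj' : j ≤ h := by
      have := Finset.mem_range.mp hj; omega
    rw [show (h + 1 - j : ℕ) = (h - j) + 1 from by omega, chZ_pascal]
    rw [show q - j - 1 = q - 1 - j from by ring]
    ring

lemma G_succ (h : ℕ) (q : ℤ) : G (h+1) q = chZ (h+1) q + 3 * G h (q-1) := by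
  rw [G, Finset.sum_range_succ', G, Finset.mul_sum]
  simp only [pow_succ]
  rw [show ((h+1) - 0 : ℕ) = h + 1 from rfl]
  have : ∀ j, (h + 1 - (j+1) : ℕ) = h - j := fun j => by omega
  simp only [this, pow_zero, one_mul, Nat.cast_ofNat]
  rw [show (q - (0:ℕ) : ℤ) = q from by push_cast; ring]
  rw [add_comm]
  congr 1
  apply Finset.sum_congr rfl
  intro j hj
  rw [show q - (j+1 : ℕ) = q - 1 - j from by push_cast; ring]
  ring

lemma chZ_eq_G (h : ℕ) (q : ℤ) (hq : q ≤ h) : chZ (h+1) q = G h q - 2 * G h (q-1) := by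
  have h1 := G_pascal h q hq
  have h2 := G_succ h q
  linarith

lemma deutschStep_iff (s : ℤ) : DeutschStep s ↔ (s = 1 ∨ (s < 0 ∧ s % 2 = 1)) := by
  constructor
  · rintro (rfl | ⟨j, rfl⟩)
    · left; rfl
    · right; constructor <;> omega
  · rintro (rfl | ⟨h1, h2⟩)
    · left; rfl
    · right; exact ⟨(-(s+1)/2).toNat, by omega⟩

/-- Admissible steps from height h. -/
noncomputable def allowed (h : ℤ) : Finset ℤ :=
  (Finset.Icc (-h) 1).filter (fun s => s = 1 ∨ (s < 0 ∧ s % 2 = 1))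

lemma mem_allowed {h s : ℤ} (hh : 0 ≤ h) :
    s ∈ allowed h ↔ ((s = 1 ∨ (s < 0 ∧ s % 2 = 1)) ∧ 0 ≤ h + s) := by
  simp only [allowed, Finset.mem_filter, Finset.mem_Icc]
  constructor
  · rintro ⟨⟨h1, h2⟩, h3⟩; exact ⟨h3, by omega⟩
  · rintro ⟨h1, h2⟩; refine ⟨⟨by omega, by omega⟩, h1⟩

lemma mem_allowed' {h s : ℤ} (hh : 0 ≤ h) :
    s ∈ allowed h ↔ (DeutschStep s ∧ 0 ≤ h + s) := by
  rw [mem_allowed hh, deutschStep_iff]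

/-- Deutsch paths of length n as a Finset. -/
noncomputable def paths : ℕ → Finset (List ℤ)
  | 0 => {[]}
  | n+1 => (paths n).biUnion fun q => (allowed q.sum).image fun s => q ++ [s]

lemma isDeutschPath_nil : IsDeutschPath [] := ⟨by simp, by simp⟩

lemma sum_nonneg_of_deutsch {p : List ℤ} (hp : IsDeutschPath p) : 0 ≤ p.sum := by
  have := hp.2 p.length
  rwa [List.take_length] at this

lemma isDeutschPath_append (q : List ℤ) (s : ℤ) :
    IsDeutschPath (q ++ [s]) ↔ IsDeutschPath q ∧ DeutschStep s ∧ 0 ≤ q.sum + s := by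
  have hsum : (q ++ [s]).sum = q.sum + s := by simp
  constructor
  · intro H
    refine ⟨⟨fun x hx => H.1 x (List.mem_append_left _ hx), ?_⟩, H.1 s (by simp), ?_⟩
    · intro m
      by_cases hm : m ≤ q.length
      · have := H.2 m
        rwa [List.take_append_of_le_length hm] at this
      · have := H.2 q.length
        rw [List.take_append_of_le_length le_rfl, List.take_length] at this
        rwa [List.take_of_length_le (by omega)]
    · have := H.2 (q.length + 1)
      rwa [List.take_of_length_le (by simp), hsum] at this
  · rintro ⟨⟨hs, hpre⟩, hds, hend⟩
    constructor
    · intro x hx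
      rcases List.mem_append.mp hx with h | h
      · exact hs x h
      · simp at h; subst h; exact hds
    · intro m
      by_cases hm : m ≤ q.length
      · rw [List.take_append_of_le_length hm]; exact hpre m
      · rw [List.take_of_length_le (by simp; omega), hsum]; exact hend

lemma mem_paths {n : ℕ} {p : List ℤ} : p ∈ paths n ↔ (p.length = n ∧ IsDeutschPath p) := by
  induction n generalizing p with
  | zero =>
    simp only [paths, Finset.mem_singleton]
    constructor
    · rintro rfl; exact ⟨rfl, isDeutschPath_nil⟩
    · rintro ⟨h1, _⟩; exact List.eq_nil_of_length_eq_zero h1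
  | succ n ih =>
    simp only [paths, Finset.mem_biUnion, Finset.mem_image]
    constructor
    · rintro ⟨q, hq, s, hs, rfl⟩
      obtain ⟨hlen, hpath⟩ := ih.mp hq
      have h0 : 0 ≤ q.sum := sum_nonneg_of_deutsch hpath
      obtain ⟨hds, hspos⟩ := (mem_allowed' h0).mp hs
      refine ⟨by simp [hlen], (isDeutschPath_append q s).mpr ⟨hpath, hds, hspos⟩⟩
    · rintro ⟨hlen, hpath⟩
      rcases p.eq_nil_or_concat with rfl | ⟨q, s, rfl⟩
      case _ => simp at hlen
      rw [List.concat_eq_append] at *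
      obtain ⟨hq, hds, hend⟩ := (isDeutschPath_append q s).mp hpath
      have hql : q.length = n := by simp at hlen; omega
      refine ⟨q, ih.mpr ⟨hql, hq⟩, s, ?_, rfl⟩
      exact (mem_allowed' (sum_nonneg_of_deutsch hq)).mpr ⟨hds, hend⟩

lemma sum_paths_succ {M : Type*} [AddCommMonoid M] (n : ℕ) (f : List ℤ → M) :
    ∑ p ∈ paths (n+1), f p = ∑ q ∈ paths n, ∑ s ∈ allowed q.sum, f (q ++ [s]) := by
  rw [show paths (n+1) = (paths n).biUnion fun q => (allowed q.sum).image fun s => q ++ [s] from rfl]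
  rw [Finset.sum_biUnion]
  · apply Finset.sum_congr rfl
    intro q hq
    rw [Finset.sum_image]
    intro s _ s' _ h
    have := List.append_cancel_left h
    simpa using this
  · intro q1 h1 q2 h2 hne
    simp only [Function.onFun, Finset.disjoint_left]
    intro x hx1 hx2
    simp only [Finset.mem_image] at hx1 hx2
    obtain ⟨s1, _, e1⟩ := hx1
    obtain ⟨s2, _, e2⟩ := hx2
    apply hne
    have : q1 ++ [s1] = q2 ++ [s2] := by rw [e1, e2]
    exact (List.append_inj' this rfl).1

lemma pathArea_append (q : List ℤ) (s : ℤ) :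
    pathArea (q ++ [s]) = pathArea q + (q.sum + s) := by
  rw [pathArea, pathArea]
  rw [show (q ++ [s]).length = q.length + 1 from by simp]
  rw [Finset.sum_range_succ]
  congr 1
  · apply Finset.sum_congr rfl
    intro m hm
    rw [List.take_append_of_le_length (by have := Finset.mem_range.mp hm; omega)]
  · rw [List.take_of_length_le (by simp)]; simp

/-- Number of Deutsch paths of length n with sum k. -/
noncomputable def Dc (n : ℕ) (k : ℤ) : ℤ := (((paths n).filter (fun p => p.sum = k)).card : ℤ)

/-- Total area of Deutsch paths of length n with sum k. -/
noncomputable def Wc (n : ℕ) (k : ℤ) : ℤ := ∑ p ∈ (paths n).filter (fun p => p.sum = k), pathArea p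

lemma Dc_eq_sum (n : ℕ) (k : ℤ) :
    Dc n k = ∑ p ∈ paths n, (if p.sum = k then 1 else 0) := by
  rw [Dc, Finset.card_filter]; push_cast; rfl

lemma Wc_eq_sum (n : ℕ) (k : ℤ) :
    Wc n k = ∑ p ∈ paths n, (if p.sum = k then pathArea p else 0) := by
  rw [Wc, Finset.sum_filter]

lemma Dc_neg (n : ℕ) {k : ℤ} (hk : k < 0) : Dc n k = 0 := by
  rw [Dc_eq_sum]
  apply Finset.sum_eq_zero
  intro p hp
  have h := sum_nonneg_of_deutsch (mem_paths.mp hp).2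
  rw [if_neg (by omega)]

lemma Wc_neg (n : ℕ) {k : ℤ} (hk : k < 0) : Wc n k = 0 := by
  rw [Wc_eq_sum]
  apply Finset.sum_eq_zero
  intro p hp
  have h := sum_nonneg_of_deutsch (mem_paths.mp hp).2
  rw [if_neg (by omega)]

lemma Dc_succ (n : ℕ) (k : ℤ) :
    Dc (n+1) k = ∑ q ∈ paths n, (if k - q.sum ∈ allowed q.sum then (1:ℤ) else 0) := by
  rw [Dc_eq_sum, sum_paths_succ]
  apply Finset.sum_congr rfl
  intro q hq
  have hsum : ∀ s : ℤ, (q ++ [s]).sum = q.sum + s := fun s => by simp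
  rw [show (∑ s ∈ allowed q.sum, if (q ++ [s]).sum = k then (1:ℤ) else 0)
      = ∑ s ∈ allowed q.sum, if s = k - q.sum then (1:ℤ) else 0 from ?_]
  · rw [Finset.sum_ite_eq' (allowed q.sum) (k - q.sum) (fun _ => (1:ℤ))]
  · apply Finset.sum_congr rfl
    intro s _
    congr 1
    simp only [hsum, eq_iff_iff]
    omega

lemma Wc_succ (n : ℕ) (k : ℤ) :
    Wc (n+1) k = ∑ q ∈ paths n,
      (if k - q.sum ∈ allowed q.sum then pathArea q + k else 0) := by
  rw [Wc_eq_sum, sum_paths_succ]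
  apply Finset.sum_congr rfl
  intro q hq
  have hsum : ∀ s : ℤ, (q ++ [s]).sum = q.sum + s := fun s => by simp
  rw [show (∑ s ∈ allowed q.sum, if (q ++ [s]).sum = k then pathArea (q ++ [s]) else 0)
      = ∑ s ∈ allowed q.sum, if s = k - q.sum then pathArea q + k else 0 from ?_]
  · rw [Finset.sum_ite_eq' (allowed q.sum) (k - q.sum) (fun _ => pathArea q + k)]
  · apply Finset.sum_congr rfl
    intro s _
    by_cases h : s = k - q.sum
    · subst h
      rw [if_pos (by rw [hsum]; ring), if_pos rfl, pathArea_append]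
      ring
    · rw [if_neg (by rw [hsum]; omega), if_neg h]

lemma allowed_step_iff {h k : ℤ} (hh : 0 ≤ h) (hk : 0 ≤ k) :
    (k - h ∈ allowed h) ↔ (h = k - 1 ∨ (k + 2 - h ∈ allowed h)) := by
  rw [mem_allowed hh, mem_allowed hh]
  constructor
  · rintro ⟨h1 | ⟨h1, h2⟩, h3⟩
    · left; omega
    · by_cases hc : h = k + 1
      · right; exact ⟨Or.inl (by omega), by omega⟩
      · right; exact ⟨Or.inr ⟨by omega, by omega⟩, by omega⟩
  · rintro (h1 | ⟨h1 | ⟨h1, h2⟩, h3⟩)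
    · constructor
      · left; omega
      · omega
    · refine ⟨Or.inr ⟨by omega, by omega⟩, by omega⟩
    · refine ⟨Or.inr ⟨by omega, by omega⟩, by omega⟩

lemma Dc_rec (n : ℕ) (k : ℤ) (hk : 0 ≤ k) :
    Dc (n+1) k = Dc (n+1) (k+2) + Dc n (k-1) := by
  rw [Dc_succ, Dc_succ, Dc_eq_sum, ← Finset.sum_add_distrib]
  apply Finset.sum_congr rfl
  intro q hq
  have h0 : 0 ≤ q.sum := sum_nonneg_of_deutsch (mem_paths.mp hq).2
  have hiff := allowed_step_iff h0 hk
  have hdisj : ¬ (q.sum = k - 1 ∧ (k + 2 - q.sum ∈ allowed q.sum)) := by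
    rintro ⟨h1, h2⟩
    rw [mem_allowed h0] at h2
    omega
  by_cases h1 : k - q.sum ∈ allowed q.sum
  · rw [if_pos h1]
    rcases hiff.mp h1 with h2 | h2
    · rw [if_neg (by rintro h3; exact hdisj ⟨h2, h3⟩), if_pos (by omega)]; ring
    · rw [if_pos h2, if_neg (by intro h3; exact hdisj ⟨by omega, h2⟩)]; ring
  · rw [if_neg h1]
    rw [if_neg (fun h2 => h1 (hiff.mpr (Or.inr h2))), if_neg (by
      intro h2
      exact h1 (hiff.mpr (Or.inl (by omega))))]
    ring

lemma Wc_rec (n : ℕ) (k : ℤ) (hk : 0 ≤ k) :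
    Wc (n+1) k = Wc (n+1) (k+2) + Wc n (k-1) + k * Dc n (k-1) - 2 * Dc (n+1) (k+2) := by
  rw [Wc_succ, Wc_succ, Wc_eq_sum, Dc_eq_sum, Dc_succ]
  rw [Finset.mul_sum, Finset.mul_sum]
  rw [show (∑ q ∈ paths n, (if k + 2 - q.sum ∈ allowed q.sum then pathArea q + (k+2) else 0))
      + (∑ p ∈ paths n, (if p.sum = k - 1 then pathArea p else 0))
      + (∑ i ∈ paths n, k * (if i.sum = k - 1 then (1:ℤ) else 0))
      - ∑ i ∈ paths n, 2 * (if k + 2 - i.sum ∈ allowed i.sum then (1:ℤ) else 0)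
      = ∑ q ∈ paths n, ((if k + 2 - q.sum ∈ allowed q.sum then pathArea q + (k+2) else 0)
        + (if q.sum = k - 1 then pathArea q else 0)
        + k * (if q.sum = k - 1 then (1:ℤ) else 0)
        - 2 * (if k + 2 - q.sum ∈ allowed q.sum then (1:ℤ) else 0)) from by
    rw [Finset.sum_sub_distrib, Finset.sum_add_distrib, Finset.sum_add_distrib, ← Finset.mul_sum]]
  apply Finset.sum_congr rfl
  intro q hq
  have h0 : 0 ≤ q.sum := sum_nonneg_of_deutsch (mem_paths.mp hq).2
  have hiff := allowed_step_iff h0 hk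
  have hdisj : ¬ (q.sum = k - 1 ∧ (k + 2 - q.sum ∈ allowed q.sum)) := by
    rintro ⟨h1, h2⟩
    rw [mem_allowed h0] at h2
    omega
  by_cases h1 : k - q.sum ∈ allowed q.sum
  · rw [if_pos h1]
    rcases hiff.mp h1 with h2 | h2
    · rw [if_neg (by rintro h3; exact hdisj ⟨h2, h3⟩), if_pos (by omega), if_pos (by omega),
        if_neg (by rintro h3; exact hdisj ⟨h2, h3⟩)]
      ring
    · rw [if_pos h2, if_neg (by intro h3; exact hdisj ⟨by omega, h2⟩),
        if_neg (by intro h3; exact hdisj ⟨by omega, h2⟩), if_pos h2]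
      ring
  · rw [if_neg h1]
    rw [if_neg (fun h2 => h1 (hiff.mpr (Or.inr h2))),
      if_neg (by intro h2; exact h1 (hiff.mpr (Or.inl (by omega)))),
      if_neg (by intro h2; exact h1 (hiff.mpr (Or.inl (by omega)))),
      if_neg (fun h2 => h1 (hiff.mpr (Or.inr h2)))]
    ring
lemma list_sum_le_length (l : List ℤ) (h : ∀ s ∈ l, s ≤ 1) : l.sum ≤ l.length := by
  induction l with
  | nil => simp
  | cons a l ih =>
    simp only [List.sum_cons, List.length_cons]
    have ha := h a (by simp)
    have := ih (fun s hs => h s (by simp [hs]))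
    push_cast
    omega

lemma list_eq_replicate (l : List ℤ) (h : ∀ s ∈ l, s ≤ 1) (hs : l.sum = l.length) :
    l = List.replicate l.length 1 := by
  induction l with
  | nil => simp
  | cons a l ih =>
    simp only [List.sum_cons, List.length_cons] at hs
    have ha := h a (by simp)
    have hl := list_sum_le_length l (fun s hs => h s (by simp [hs]))
    have ha1 : a = 1 := by push_cast at hs; omega
    have hll : l.sum = l.length := by push_cast at hs ⊢; omega
    rw [List.length_cons, List.replicate_succ, ha1]
    nth_rewrite 1 [ih (fun s hs => h s (by simp [hs])) hll]
    rfl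

lemma replicate_mem_paths (n : ℕ) : List.replicate n (1:ℤ) ∈ paths n := by
  rw [mem_paths]
  refine ⟨by simp, ⟨fun s hs => ?_, fun m => ?_⟩⟩
  · rw [List.eq_of_mem_replicate hs]; left; rfl
  · rw [List.take_replicate, List.sum_replicate]
    simp

lemma filter_top (n : ℕ) :
    (paths n).filter (fun p => p.sum = (n:ℤ)) = {List.replicate n 1} := by
  apply Finset.eq_singleton_iff_unique_mem.mpr
  constructor
  · rw [Finset.mem_filter]
    refine ⟨replicate_mem_paths n, by rw [List.sum_replicate]; simp⟩
  · intro p hp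
    rw [Finset.mem_filter] at hp
    obtain ⟨hp1, hp2⟩ := hp
    obtain ⟨hlen, hpath⟩ := mem_paths.mp hp1
    have hle : ∀ s ∈ p, s ≤ 1 := by
      intro s hs
      rcases (deutschStep_iff s).mp (hpath.1 s hs) with h | ⟨h, _⟩ <;> omega
    have := list_eq_replicate p hle (by rw [hp2, hlen])
    rw [this, hlen]

lemma Dc_top (n : ℕ) : Dc n n = 1 := by
  rw [Dc, filter_top]; simp

lemma gauss (n : ℕ) : 2 * (∑ m ∈ Finset.range n, ((m:ℤ)+1)) = n * (n+1) := by
  induction n with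
  | zero => simp
  | succ n ih => rw [Finset.sum_range_succ]; push_cast; push_cast at ih; linarith

lemma Wc_top (n : ℕ) : 2 * Wc n n = n * (n+1) := by
  rw [Wc, filter_top, Finset.sum_singleton]
  rw [show pathArea (List.replicate n 1) = ∑ m ∈ Finset.range n, ((m:ℤ)+1) from ?_]
  · exact gauss n
  · rw [pathArea, List.length_replicate]
    apply Finset.sum_congr rfl
    intro m hm
    rw [List.take_replicate, List.sum_replicate]
    have := Finset.mem_range.mp hm
    rw [show min (m+1) n = m + 1 from by omega]
    simp
lemma df_id (L : ℕ) (qz : ℤ) :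
    chZ (L+2) (qz+1) - 2 * chZ (L+2) qz
    = (chZ (L+1) qz - 2 * chZ (L+1) (qz-1)) + (chZ (L+1) (qz+1) - 2 * chZ (L+1) qz) := by
  have p1 : chZ (L+2) (qz+1) = chZ (L+1) (qz+1) + chZ (L+1) qz := by
    have h := chZ_pascal (L+1) (qz+1)
    rw [show qz+1-1 = qz from by ring] at h
    rwa [show L+1+1 = L+2 from by omega] at h
  have p2 : chZ (L+2) qz = chZ (L+1) qz + chZ (L+1) (qz-1) := by
    have h := chZ_pascal (L+1) qz
    rwa [show L+1+1 = L+2 from by omega] at h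
  linear_combination p1 - 2 * p2

lemma wID (L : ℕ) (qz k : ℤ) (h1 : qz + 1 ≤ L) :
    (2 - k*(3*k+1)) * G (L+2) qz + 3*(k+1)*(k+2) * G (L+1) (qz-1) + k*(k+1) * G (L+2) (qz+1)
    = ((2 - (k+2)*(3*k+7)) * G (L+1) (qz-1) + 3*(k+3)*(k+4) * G L (qz-2) + (k+2)*(k+3) * G (L+1) qz)
    + ((2 - (k-1)*(3*k-2)) * G (L+1) qz + 3*k*(k+1) * G L (qz-1) + (k-1)*k * G (L+1) (qz+1))
    + 2*k*(chZ (L+1) (qz+1) - 2*chZ (L+1) qz)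
    - 4*(chZ (L+1) qz - 2*chZ (L+1) (qz-1)) := by
  have g1 : G (L+1) (qz+1) = G L (qz+1) + G L qz := by
    have h := G_pascal L (qz+1) (by omega)
    rwa [show qz+1-1 = qz from by ring] at h
  have g2 : G (L+1) qz = G L qz + G L (qz-1) := G_pascal L qz (by omega)
  have g3 : G (L+1) (qz-1) = G L (qz-1) + G L (qz-2) := by
    have h := G_pascal L (qz-1) (by omega)
    rwa [show qz-1-1 = qz-2 from by ring] at h
  have g4 : G (L+2) (qz+1) = G (L+1) (qz+1) + G (L+1) qz := by
    have h := G_pascal (L+1) (qz+1) (by push_cast; omega)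
    rw [show qz+1-1 = qz from by ring] at h
    rwa [show L+1+1 = L+2 from by omega] at h
  have g5 : G (L+2) qz = G (L+1) qz + G (L+1) (qz-1) := by
    have h := G_pascal (L+1) qz (by push_cast; omega)
    rwa [show L+1+1 = L+2 from by omega] at h
  have c1 : chZ (L+1) (qz+1) = G L (qz+1) - 2 * G L qz := by
    have h := chZ_eq_G L (qz+1) (by omega)
    rwa [show qz+1-1 = qz from by ring] at h
  have c2 : chZ (L+1) qz = G L qz - 2 * G L (qz-1) := chZ_eq_G L qz (by omega)
  have c3 : chZ (L+1) (qz-1) = G L (qz-1) - 2 * G L (qz-2) := by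
    have h := chZ_eq_G L (qz-1) (by omega)
    rwa [show qz-1-1 = qz-2 from by ring] at h
  linear_combination (k^2+k) * g4 + (2 - k - 3*k^2) * g5 + (2*k) * g1 + (-10*k-4) * g2
    + (3*k^2+21*k+20) * g3 + (-2*k) * c1 + (4*k+4) * c2 - 8 * c3
lemma chZ_half (q : ℕ) : chZ (3*q+2) ((q:ℤ)+1) = 2 * chZ (3*q+2) (q:ℤ) := by
  rw [chZ_of_nonneg (by omega), chZ_of_nonneg (by omega)]
  rw [show ((q:ℤ)+1).toNat = q+1 from by omega, show ((q:ℤ)).toNat = q from by omega]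
  have h := Nat.choose_succ_right_eq (3*q+2) q
  rw [show (3*q+2) - q = 2*(q+1) from by omega] at h
  have h4 : (3*q+2).choose (q+1) = 2 * (3*q+2).choose q := by
    apply Nat.eq_of_mul_eq_mul_right (show 0 < q+1 from by omega)
    rw [h]; ring
  rw [h4]; push_cast; ring

lemma main_closed (N : ℕ) : ∀ q : ℕ, 2*q ≤ N →
    (Dc N ((N:ℤ) - 2*(q:ℤ)) = chZ (N+q) (q:ℤ) - 2 * chZ (N+q) ((q:ℤ)-1)
    ∧ 2 * Wc N ((N:ℤ) - 2*(q:ℤ))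
      = (2 - ((N:ℤ)-2*(q:ℤ))*(3*((N:ℤ)-2*(q:ℤ))+1)) * G (N+q) ((q:ℤ)-1)
      + 3*(((N:ℤ)-2*(q:ℤ))+1)*(((N:ℤ)-2*(q:ℤ))+2) * G (N+q-1) ((q:ℤ)-2)
      + ((N:ℤ)-2*(q:ℤ))*(((N:ℤ)-2*(q:ℤ))+1) * G (N+q) (q:ℤ)) := by
  induction N with
  | zero =>
    intro q hq
    have hq0 : q = 0 := by omega
    subst hq0
    have e0 : ((0:ℕ):ℤ) - 2*((0:ℕ):ℤ) = ((0:ℕ):ℤ) := by norm_num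
    constructor
    · rw [e0, Dc_top 0]
      rw [show ((0:ℕ):ℤ) = (0:ℤ) from by norm_num]
      rw [chZ_zero, chZ_neg (by norm_num)]
      ring
    · rw [e0]
      rw [show ((0:ℕ):ℤ) = (0:ℤ) from by norm_num]
      have := Wc_top 0
      rw [show ((0:ℕ):ℤ) = (0:ℤ) from by norm_num] at this
      rw [this]
      rw [G_neg (show (0:ℤ)-1 < 0 from by norm_num), G_neg (show (0:ℤ)-2 < 0 from by norm_num),
        G_zero]
      ring
  | succ N ihN =>
    intro q
    induction q with
    | zero =>
      intro _
      have e0 : ((N+1:ℕ):ℤ) - 2*((0:ℕ):ℤ) = ((N+1:ℕ):ℤ) := by push_cast; ring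
      constructor
      · rw [e0, Dc_top (N+1)]
        rw [show ((0:ℕ):ℤ) = (0:ℤ) from by norm_num]
        rw [chZ_zero, chZ_neg (by norm_num)]
        ring
      · rw [e0]
        rw [show ((0:ℕ):ℤ) = (0:ℤ) from by norm_num]
        rw [Wc_top (N+1)]
        rw [G_neg (show (0:ℤ)-1 < 0 from by norm_num), G_neg (show (0:ℤ)-2 < 0 from by norm_num),
          G_zero]
        push_cast
        ring
    | succ q ihq =>
      intro hq
      -- canonical k
      set kZ : ℤ := (N:ℤ) - 2*(q:ℤ) - 1 with hkZ
      have hkZ0 : 0 ≤ kZ := by rw [hkZ]; omega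
      -- previous level at (N+1, q)
      have hDtop := (ihq (by omega)).1
      have hWtop := (ihq (by omega)).2
      rw [show ((N+1:ℕ):ℤ) - 2*((q:ℕ):ℤ) = kZ + 2 from by rw [hkZ]; push_cast; ring] at hDtop hWtop
      rw [show (N+1+q : ℕ) = N+q+1 from by omega] at hDtop hWtop
      rw [show (N+q+1-1 : ℕ) = N+q from by omega] at hWtop
      -- level N at q+1
      have hD1 : Dc N (kZ - 1) = chZ (N+q+1) ((q:ℤ)+1) - 2 * chZ (N+q+1) (q:ℤ) := by
        by_cases hN2 : 2*(q+1) ≤ N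
        · have h := (ihN (q+1) hN2).1
          rw [show ((N:ℕ):ℤ) - 2*((q+1:ℕ):ℤ) = kZ - 1 from by rw [hkZ]; push_cast; ring] at h
          rw [show (N+(q+1) : ℕ) = N+q+1 from by omega] at h
          rw [show ((q+1:ℕ):ℤ) = (q:ℤ)+1 from by push_cast; ring] at h
          rw [show ((q:ℤ)+1)-1 = (q:ℤ) from by ring] at h
          exact h
        · have hN : N = 2*q+1 := by omega
          have hk1 : kZ - 1 = -1 := by rw [hkZ, hN]; push_cast; ring
          rw [hk1, Dc_neg N (by norm_num)]
          have h2 : (N+q+1 : ℕ) = 3*q+2 := by omega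
          rw [h2, chZ_half q]
          ring
      have hW1 : 2 * Wc N (kZ - 1)
          = (2 - (kZ-1)*(3*(kZ-1)+1)) * G (N+q+1) (q:ℤ)
          + 3*((kZ-1)+1)*((kZ-1)+2) * G (N+q) ((q:ℤ)-1)
          + (kZ-1)*((kZ-1)+1) * G (N+q+1) ((q:ℤ)+1) := by
        by_cases hN2 : 2*(q+1) ≤ N
        · have h := (ihN (q+1) hN2).2
          rw [show ((N:ℕ):ℤ) - 2*((q+1:ℕ):ℤ) = kZ - 1 from by rw [hkZ]; push_cast; ring] at h
          rw [show (N+(q+1) : ℕ) = N+q+1 from by omega] at h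
          rw [show (N+q+1-1 : ℕ) = N+q from by omega] at h
          rw [show ((q+1:ℕ):ℤ) = (q:ℤ)+1 from by push_cast; ring] at h
          rw [show ((q:ℤ)+1)-1 = (q:ℤ) from by ring] at h
          rw [show ((q:ℤ)+1)-2 = (q:ℤ)-1 from by ring] at h
          exact h
        · have hN : N = 2*q+1 := by omega
          have hk1 : kZ - 1 = -1 := by rw [hkZ, hN]; push_cast; ring
          rw [hk1, Wc_neg N (by norm_num)]
          ring
      -- goal normalization
      rw [show ((N+1:ℕ):ℤ) - 2*((q+1:ℕ):ℤ) = kZ from by rw [hkZ]; push_cast; ring]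
      rw [show (N+1+(q+1) : ℕ) = N+q+2 from by omega]
      rw [show (N+q+2-1 : ℕ) = N+q+1 from by omega]
      rw [show ((q+1:ℕ):ℤ) = (q:ℤ)+1 from by push_cast; ring]
      rw [show ((q:ℤ)+1)-1 = (q:ℤ) from by ring]
      rw [show ((q:ℤ)+1)-2 = (q:ℤ)-1 from by ring]
      have hrecD := Dc_rec N kZ hkZ0
      have hrecW := Wc_rec N kZ hkZ0
      have hwid := wID (N+q) (q:ℤ) kZ (by omega)
      constructor
      · rw [hrecD, hDtop, hD1]
        linear_combination -df_id (N+q) (q:ℤ)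
      · linear_combination 2 * hrecW + hWtop + hW1 + 2 * kZ * hD1 - 4 * hDtop - hwid
lemma pathArea_nonneg {p : List ℤ} (hp : IsDeutschPath p) : 0 ≤ pathArea p := by
  apply Finset.sum_nonneg
  intro m _
  exact hp.2 (m+1)

lemma pathArea_le {p : List ℤ} (hp : IsDeutschPath p) :
    pathArea p ≤ (p.length : ℤ) * p.length := by
  have h : ∀ m ∈ Finset.range p.length, (p.take (m+1)).sum ≤ (p.length : ℤ) := by
    intro m _
    have hsteps : ∀ s ∈ p.take (m+1), s ≤ 1 := by
      intro s hs
      have := hp.1 s (List.take_subset _ _ hs)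
      rcases (deutschStep_iff s).mp this with h | ⟨h, _⟩ <;> omega
    calc (p.take (m+1)).sum ≤ ((p.take (m+1)).length : ℤ) := list_sum_le_length _ hsteps
      _ ≤ (p.length : ℤ) := by
          have : (p.take (m+1)).length ≤ p.length := by
            rw [List.length_take]; omega
          exact_mod_cast this
  calc pathArea p ≤ ∑ _m ∈ Finset.range p.length, (p.length : ℤ) := Finset.sum_le_sum h
    _ = (p.length : ℤ) * p.length := by rw [Finset.sum_const, Finset.card_range]; ring



/-- The total area, summed over all Deutsch paths of length 2n
returning to the x-axis, equals Σ_{k≥0} 3ᵏ·[C(3n-k, n-1-k) + 3·C(3n-1-k, n-2-k)]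
(binomials vanishing when the lower index is negative, so only k < n contributes;
the area of any such path is at most 4n², so the left-hand sum over possible
area values a is finite). -/

theorem deutsch_total_area (n : ℕ) :
    ∑ a ∈ Finset.range (4 * n ^ 2 + 1),
        a * Nat.card {p : List ℤ // p.length = 2 * n ∧ IsDeutschPath p ∧
              p.sum = 0 ∧ pathArea p = (a : ℤ)} =
      ∑ k ∈ Finset.range n,
        3 ^ k * ((3 * n - k).choose (n - 1 - k) +
          3 * (if k + 2 ≤ n then (3 * n - 1 - k).choose (n - 2 - k) else 0)) := by
  -- notation
  set M : ℕ := 4 * n ^ 2 with hM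
  set F : Finset (List ℤ) := (paths (2*n)).filter (fun p => p.sum = 0) with hF
  -- convert Nat.card to Finset.card
  have hcard : ∀ a : ℕ, Nat.card {p : List ℤ // p.length = 2 * n ∧ IsDeutschPath p ∧
      p.sum = 0 ∧ pathArea p = (a : ℤ)} = (F.filter (fun p => pathArea p = (a:ℤ))).card := by
    intro a
    rw [← Nat.card_eq_finsetCard]
    apply Nat.card_congr
    apply Equiv.subtypeEquivRight
    intro p
    rw [hF, Finset.filter_filter]
    simp only [Finset.mem_filter, mem_paths]
    tauto
  -- LHS as total area
  have hL : ((∑ a ∈ Finset.range (4 * n ^ 2 + 1),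
      a * Nat.card {p : List ℤ // p.length = 2 * n ∧ IsDeutschPath p ∧
        p.sum = 0 ∧ pathArea p = (a : ℤ)} : ℕ) : ℤ) = Wc (2*n) 0 := by
    push_cast [hcard]
    rw [show Wc (2*n) 0 = ∑ p ∈ F, pathArea p from rfl]
    rw [show (∑ p ∈ F, pathArea p)
        = ∑ p ∈ F, ∑ a ∈ Finset.range (4 * n ^ 2 + 1),
            (if pathArea p = (a:ℤ) then (a:ℤ) else 0) from ?_]
    · rw [Finset.sum_comm]
      apply Finset.sum_congr rfl
      intro a _
      rw [← Finset.sum_filter, Finset.sum_const]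
      push_cast
      ring
    · apply Finset.sum_congr rfl
      intro p hp
      rw [hF, Finset.mem_filter] at hp
      obtain ⟨hp1, _⟩ := hp
      obtain ⟨hlen, hpath⟩ := mem_paths.mp hp1
      have h0 : 0 ≤ pathArea p := pathArea_nonneg hpath
      have h1 : pathArea p ≤ (M:ℤ) := by
        have h2 := pathArea_le hpath
        rw [hlen] at h2
        have h3 : ((2*n:ℕ):ℤ) * ((2*n:ℕ):ℤ) = (M:ℤ) := by rw [hM]; push_cast; ring
        linarith
      rw [Finset.sum_eq_single ((pathArea p).toNat)]
      · rw [if_pos (by omega)]; omega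
      · intro b _ hb
        rw [if_neg (by omega)]
      · intro hmem
        exfalso
        apply hmem
        rw [Finset.mem_range]
        omega
  -- closed form for the area
  have hmain := (main_closed (2*n) n (le_refl _)).2
  rw [show ((2*n : ℕ):ℤ) - 2*((n:ℕ):ℤ) = 0 from by push_cast; ring] at hmain
  rw [show (2*n+n : ℕ) = 3*n from by omega] at hmain
  -- G sums as the RHS
  have hG1 : G (3*n) ((n:ℤ)-1)
      = ∑ k ∈ Finset.range n, (3:ℤ)^k * ((3*n-k).choose (n-1-k) : ℤ) := by
    rw [G, ← Finset.sum_subset (Finset.range_subset_range.mpr (show n ≤ 3*n+1 from by omega))]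
    · apply Finset.sum_congr rfl
      intro j hj
      have hjn : j < n := Finset.mem_range.mp hj
      rw [chZ_of_nonneg (show (0:ℤ) ≤ (n:ℤ)-1-j from by omega)]
      rw [show (((n:ℤ)-1-j)).toNat = n-1-j from by omega]
    · intro j _ hj
      have hjn : n ≤ j := by
        by_contra hc
        exact hj (Finset.mem_range.mpr (by omega))
      rw [chZ_neg (show ((n:ℤ)-1-j) < 0 from by omega)]
      ring
  have hG2 : G (3*n-1) ((n:ℤ)-2)
      = ∑ k ∈ Finset.range n,
          (3:ℤ)^k * (if k + 2 ≤ n then ((3*n-1-k).choose (n-2-k) : ℤ) else 0) := by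
    rw [G, ← Finset.sum_subset (Finset.range_subset_range.mpr (show n ≤ 3*n-1+1 from by omega))]
    · apply Finset.sum_congr rfl
      intro j hj
      have hjn : j < n := Finset.mem_range.mp hj
      by_cases hc : j + 2 ≤ n
      · rw [if_pos hc, chZ_of_nonneg (show (0:ℤ) ≤ (n:ℤ)-2-j from by omega)]
        rw [show (((n:ℤ)-2-j)).toNat = n-2-j from by omega]
      · rw [if_neg hc, chZ_neg (show ((n:ℤ)-2-j) < 0 from by omega)]
    · intro j _ hj
      have hjn : n ≤ j := by
        by_contra hc
        exact hj (Finset.mem_range.mpr (by omega))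
      rw [chZ_neg (show ((n:ℤ)-2-j) < 0 from by omega)]
      ring
  -- cast the RHS
  have hR : ((∑ k ∈ Finset.range n,
      3 ^ k * ((3 * n - k).choose (n - 1 - k) +
        3 * (if k + 2 ≤ n then (3 * n - 1 - k).choose (n - 2 - k) else 0)) : ℕ) : ℤ)
      = G (3*n) ((n:ℤ)-1) + 3 * G (3*n-1) ((n:ℤ)-2) := by
    rw [hG1, hG2, Finset.mul_sum, ← Finset.sum_add_distrib]
    push_cast [apply_ite (Nat.cast : ℕ → ℤ)]
    apply Finset.sum_congr rfl
    intro k _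
    ring
  -- conclude
  have : (2:ℤ) * (G (3*n) ((n:ℤ)-1) + 3 * G (3*n-1) ((n:ℤ)-2)) = 2 * Wc (2*n) 0 := by
    rw [hmain]; ring
  have hinj : ∀ a b : ℕ, (a:ℤ) = (b:ℤ) → a = b := fun a b h => by exact_mod_cast h
  apply hinj
  rw [hL, hR]
  linarith
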